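/- arXiv:2003.10995 — 2 statements merged into one kernel-verified Lean document; each statement's English description precedes it below -/
import Mathlib

section
/- With F₁ as defined in the context, F₁ is differentiable at 0 and F₁'(0) = F₁(0)·( −log N + 2·Re((Λ'/Λ)(1+2iT,ψ)) − 2·(ξ'/ξ)(2) + ∑_{p prime, p|N} (log p)/(p+1) ). -/
open Complex Filter Topology

noncomputable def xi (s : ℂ) : ℂ :=
  (Real.pi : ℂ) ^ (-s / 2) * Complex.Gamma (s / 2) * riemannZeta s

noncomputable def conjChar {N : ℕ} (ψ : DirichletCharacter ℂ N) : DirichletCharacter ℂ N :=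
  ψ.ringHomComp (starRingEnd ℂ)

noncomputable def Lam {N : ℕ} [NeZero N] (ψ : DirichletCharacter ℂ N) (s : ℂ) : ℂ :=
  ((N : ℂ) / (Real.pi : ℂ)) ^ (s / 2) * Complex.Gamma (s / 2) * DirichletCharacter.LFunction ψ s

noncomputable def nu (N : ℕ) : ℝ := N * ∏ p ∈ N.primeFactors, (1 + 1 / (p : ℝ))

noncomputable def F1 (N : ℕ) [NeZero N] (ψ : DirichletCharacter ℂ N) (T : ℝ) (η : ℝ) : ℂ :=
  (N : ℂ) ^ (-1 - (η : ℂ)) *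
    (Lam ψ (1 + η + 2 * I * T) * Lam (conjChar ψ) (1 + η - 2 * I * T) /
      (xi (2 + 2 * η) * Lam ψ (1 + 2 * I * T) * Lam (conjChar ψ) (1 - 2 * I * T))) *
    ∏ p ∈ N.primeFactors, (1 + (p : ℂ) ^ (-1 - (η : ℂ)))⁻¹

noncomputable def F2 (N : ℕ) [NeZero N] (ψ : DirichletCharacter ℂ N) (T : ℝ) (η : ℝ) : ℂ :=
  (N : ℂ) ^ (-1 : ℂ) *
    (Lam ψ (1 - η + 2 * I * T) * Lam (conjChar ψ) (1 - η - 2 * I * T) *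
        Lam ψ (1 - 2 * η + 2 * I * T) /
      (xi (2 - 2 * η) * (Lam ψ (1 + 2 * I * T)) ^ 2 *
        Lam (conjChar ψ) (1 + 2 * η - 2 * I * T))) *
    ∏ p ∈ N.primeFactors, (1 + (p : ℂ) ^ (-1 + (η : ℂ)))⁻¹

noncomputable def F3 (N : ℕ) [NeZero N] (ψ : DirichletCharacter ℂ N) (T : ℝ) (η : ℝ) : ℂ :=
  (N : ℂ) ^ (-1 - (η : ℂ)) *
    (Lam ψ (1 - η + 2 * I * T) * Lam (conjChar ψ) (1 + η - 2 * I * T) /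
      (xi 2 * Lam ψ (1 + 2 * I * T) * Lam (conjChar ψ) (1 + 2 * η - 2 * I * T))) *
    ∏ p ∈ N.primeFactors, (1 - (p : ℂ) ^ (-1 + (η : ℂ))) / (1 - (p : ℂ) ^ (-2 : ℂ))

noncomputable def F4 (N : ℕ) [NeZero N] (ψ : DirichletCharacter ℂ N) (T : ℝ) (η : ℝ) : ℂ :=
  (N : ℂ) ^ (-1 : ℂ) *
    (Lam ψ (1 - η + 2 * I * T) * Lam (conjChar ψ) (1 + η - 2 * I * T) /
      (xi 2 * Lam ψ (1 + 2 * I * T) * Lam (conjChar ψ) (1 + 2 * η - 2 * I * T))) *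
    ∏ p ∈ N.primeFactors, (1 - (p : ℂ) ^ (-1 - (η : ℂ))) / (1 - (p : ℂ) ^ (-2 : ℂ))

open ComplexConjugate in
lemma hasDerivAt_conj_conj {f : ℂ → ℂ} {f' z : ℂ} (h : HasDerivAt f f' (conj z)) :
    HasDerivAt (fun w => conj (f (conj w))) (conj f') z := by
  rw [hasDerivAt_iff_tendsto_slope] at h ⊢
  have hconj : Filter.Tendsto (fun w : ℂ => conj w) (𝓝[≠] z) (𝓝[≠] (conj z)) := by
    rw [nhdsWithin, nhdsWithin]
    refine Filter.Tendsto.inf (Complex.continuous_conj.tendsto z) ?_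
    rw [Filter.tendsto_principal_principal]
    intro w hw hc
    exact hw (by simpa using congrArg conj hc)
  have H := (Complex.continuous_conj.tendsto f').comp (h.comp hconj)
  refine H.congr fun w => ?_
  simp only [Function.comp_apply, slope_def_field]
  simp [map_div₀, map_sub]

open DirichletCharacter in
lemma LFunction_conjChar_eq {N : ℕ} [NeZero N] {ψ : DirichletCharacter ℂ N} (hψ : ψ ≠ 1) :
    ∀ s : ℂ, LFunction (ψ.ringHomComp (starRingEnd ℂ)) s = (starRingEnd ℂ) (LFunction ψ ((starRingEnd ℂ) s)) := by
  have hc : ψ.ringHomComp (starRingEnd ℂ) ≠ 1 :=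
    (MulChar.ringHomComp_ne_one_iff (RingHom.injective _)).mpr hψ
  have h1 : Differentiable ℂ (LFunction (ψ.ringHomComp (starRingEnd ℂ))) :=
    differentiable_LFunction hc
  have h2 : Differentiable ℂ (fun w => (starRingEnd ℂ) (LFunction ψ ((starRingEnd ℂ) w))) :=
    fun w => (hasDerivAt_conj_conj ((differentiable_LFunction hψ _).hasDerivAt)).differentiableAt
  have key : ∀ w : ℂ, 1 < w.re →
      LFunction (ψ.ringHomComp (starRingEnd ℂ)) w = (starRingEnd ℂ) (LFunction ψ ((starRingEnd ℂ) w)) := by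
    intro w hw
    have hw' : 1 < ((starRingEnd ℂ) w).re := by simpa using hw
    rw [LFunction_eq_LSeries _ hw, LFunction_eq_LSeries _ hw', LSeries, LSeries]
    have hmap := Complex.conjCLE.map_tsum (L := SummationFilter.unconditional ℕ)
      (f := fun n => LSeries.term (fun x : ℕ => ψ (x : ZMod N)) ((starRingEnd ℂ) w) n)
    simp only [Complex.conjCLE_apply] at hmap
    rw [hmap]
    refine tsum_congr fun n => ?_
    rcases eq_or_ne n 0 with rfl | hn
    · simp [LSeries.term_zero]
    · rw [LSeries.term_of_ne_zero hn, LSeries.term_of_ne_zero hn]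
      simp only [Complex.conjCLE_apply, map_div₀, MulChar.ringHomComp_apply]
      congr 1
      rw [Complex.cpow_conj _ _ (by simp [Complex.natCast_arg]; positivity : ((n:ℂ)).arg ≠ Real.pi)]
      rw [Complex.conj_conj, Complex.conj_natCast]
  have heq := AnalyticOnNhd.eq_of_eventuallyEq
    (analyticOnNhd_univ_iff_differentiable.mpr h1)
    (analyticOnNhd_univ_iff_differentiable.mpr h2)
    (z₀ := 2)
    (by filter_upwards [(isOpen_lt continuous_const continuous_re).mem_nhds
          (by norm_num : (1:ℝ) < (2:ℂ).re)] with w hw using key w hw)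
  exact fun s => congrFun heq s


lemma Lam_conj {N : ℕ} [NeZero N] {ψ : DirichletCharacter ℂ N} (hψ : ψ ≠ 1) (s : ℂ) :
    Lam (conjChar ψ) s = (starRingEnd ℂ) (Lam ψ ((starRingEnd ℂ) s)) := by
  have hNpos : 0 < (N : ℝ) / Real.pi := by
    have := Real.pi_pos
    have : 0 < (N:ℝ) := by exact_mod_cast Nat.pos_of_ne_zero (NeZero.ne N)
    positivity
  have hbase : ((N : ℂ) / (Real.pi : ℂ)) = (((N : ℝ) / Real.pi : ℝ) : ℂ) := by push_cast; ring
  unfold Lam conjChar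
  rw [LFunction_conjChar_eq hψ s, map_mul, map_mul]
  congr 2
  · rw [hbase, show s / 2 = (starRingEnd ℂ) ((starRingEnd ℂ) s / 2) by
      rw [map_div₀, Complex.conj_conj, Complex.conj_ofNat],
      Complex.cpow_conj _ _ (by rw [Complex.arg_ofReal_of_nonneg hNpos.le]; exact Real.pi_ne_zero.symm),
      Complex.conj_ofReal]
  · rw [show (starRingEnd ℂ) s / 2 = (starRingEnd ℂ) (s / 2) by rw [map_div₀, Complex.conj_ofNat],
      Complex.Gamma_conj, Complex.conj_conj]

lemma differentiableAt_Lam {N : ℕ} [NeZero N] {ψ : DirichletCharacter ℂ N} (hψ : ψ ≠ 1)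
    {s : ℂ} (hs : 0 < s.re) : DifferentiableAt ℂ (Lam ψ) s := by
  have hNπ : ((N : ℂ) / (Real.pi : ℂ)) ≠ 0 := by
    refine div_ne_zero ?_ ?_
    · exact_mod_cast Nat.cast_ne_zero.mpr (NeZero.ne N)
    · exact_mod_cast Complex.ofReal_ne_zero.mpr Real.pi_ne_zero
  have hhalf : ∀ m : ℕ, s / 2 ≠ -m := by
    intro m h
    have : (s / 2).re = (-(m:ℂ)).re := by rw [h]
    simp only [Complex.div_re, Complex.neg_re, Complex.natCast_re] at this
    have h2 : (s / 2).re = s.re / 2 := by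
      rw [show (2:ℂ) = ((2:ℝ):ℂ) by norm_num, Complex.div_ofReal_re]
    rw [h] at h2
    simp only [Complex.neg_re, Complex.natCast_re] at h2
    nlinarith [Nat.cast_nonneg (α := ℝ) m]
  refine DifferentiableAt.mul (DifferentiableAt.mul ?_ ?_) ?_
  · exact (differentiableAt_id.div_const 2).const_cpow (Or.inl hNπ)
  · exact (Complex.differentiableAt_Gamma _ hhalf).comp s (differentiableAt_id.div_const 2)
  · exact DirichletCharacter.differentiable_LFunction hψ s

lemma Lam_ne_zero {N : ℕ} [NeZero N] {ψ : DirichletCharacter ℂ N} (hψ : ψ ≠ 1)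
    {s : ℂ} (h1 : 1 ≤ s.re) : Lam ψ s ≠ 0 := by
  have hNπ : ((N : ℂ) / (Real.pi : ℂ)) ≠ 0 := by
    refine div_ne_zero ?_ ?_
    · exact_mod_cast Nat.cast_ne_zero.mpr (NeZero.ne N)
    · exact_mod_cast Complex.ofReal_ne_zero.mpr Real.pi_ne_zero
  refine mul_ne_zero (mul_ne_zero ?_ ?_) ?_
  · simp [Complex.cpow_eq_zero_iff, hNπ]
  · refine Complex.Gamma_ne_zero_of_re_pos ?_
    rw [show (2:ℂ) = ((2:ℝ):ℂ) by norm_num, Complex.div_ofReal_re]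
    linarith
  · exact DirichletCharacter.LFunction_ne_zero_of_one_le_re ψ (.inl hψ) h1

lemma differentiableAt_xi_two : DifferentiableAt ℂ xi 2 := by
  unfold xi
  refine DifferentiableAt.mul (DifferentiableAt.mul ?_ ?_) ?_
  · exact ((differentiableAt_id.neg).div_const 2).const_cpow
      (Or.inl (by exact_mod_cast Complex.ofReal_ne_zero.mpr Real.pi_ne_zero))
  · refine (Complex.differentiableAt_Gamma _ ?_).comp _ (differentiableAt_id.div_const 2)
    intro m h
    have : ((2:ℂ)/2).re = (-(m:ℂ)).re := by rw [h]
    norm_num at this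
    nlinarith [Nat.cast_nonneg (α := ℝ) m]
  · exact differentiableAt_riemannZeta (by norm_num)

lemma xi_two_ne_zero : xi 2 ≠ 0 := by
  unfold xi
  refine mul_ne_zero (mul_ne_zero ?_ ?_) ?_
  · simp [Complex.cpow_eq_zero_iff, Complex.ofReal_ne_zero.mpr Real.pi_ne_zero]
  · norm_num [Complex.Gamma_one]
  · exact riemannZeta_ne_zero_of_one_lt_re (by norm_num)

lemma hasDerivAt_finset_prod_log {ι : Type*} [DecidableEq ι] {u : Finset ι} {f : ι → ℂ → ℂ} {a : ι → ℂ} {x : ℂ}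
    (h : ∀ i ∈ u, HasDerivAt (f i) (f i x * a i) x) :
    HasDerivAt (fun z => ∏ i ∈ u, f i z) ((∏ i ∈ u, f i x) * ∑ i ∈ u, a i) x := by
  have H := HasDerivAt.fun_finsetProd (𝕜 := ℂ) (u := u) (f := f)
    (f' := fun i => f i x * a i) (x := x) h
  refine H.congr_deriv ?_
  symm
  rw [Finset.mul_sum]
  refine Finset.sum_congr rfl fun i hi => ?_
  rw [smul_eq_mul, ← Finset.prod_erase_mul u _ hi]
  ring

lemma prime_factor_hasDerivAt {p : ℕ} (hp : 2 ≤ p) :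
    HasDerivAt (fun z : ℂ => (1 + (p:ℂ) ^ (-1 - z))⁻¹)
      ((1 + (p:ℂ) ^ (-1 - (0:ℂ)))⁻¹ * ((Real.log p / (p+1) : ℝ) : ℂ)) 0 := by
  have hp0 : (p:ℂ) ≠ 0 := Nat.cast_ne_zero.mpr (by omega)
  have hpinv : (p:ℂ) ^ (-1 - (0:ℂ)) = ((p:ℂ))⁻¹ := by
    norm_num [Complex.cpow_neg_one]
  have hp1 : (p:ℂ) + 1 ≠ 0 := by
    exact_mod_cast (Nat.cast_add_one_ne_zero (R := ℂ) p)
  have hne : (1 + (p:ℂ) ^ (-1 - (0:ℂ))) ≠ 0 := by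
    rw [hpinv]
    intro h
    apply hp1
    have := congrArg (· * (p:ℂ)) h
    field_simp at this
    linear_combination this
  have hinner : HasDerivAt (fun z : ℂ => -1 - z) (-1) 0 := by
    simpa using (hasDerivAt_id (0:ℂ)).const_sub (-1)
  have hcp : HasDerivAt (fun z : ℂ => (p:ℂ) ^ (-1 - z))
      ((p:ℂ) ^ (-1 - (0:ℂ)) * Complex.log p * (-1)) 0 := hinner.const_cpow (Or.inl hp0)
  have hg : HasDerivAt (fun z : ℂ => 1 + (p:ℂ) ^ (-1 - z))
      ((p:ℂ) ^ (-1 - (0:ℂ)) * Complex.log p * (-1)) 0 := hcp.const_add 1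
  have H := hg.inv hne
  refine H.congr_deriv ?_
  symm
  rw [hpinv] at *
  rw [← Complex.natCast_log]
  push_cast
  field_simp


set_option maxHeartbeats 1000000 in
/-- `F₁` is differentiable at `0` with
`F₁'(0) = F₁(0)·(−log N + 2 Re((Λ'/Λ)(1+2iT,ψ)) − 2(ξ'/ξ)(2) + ∑_{p∣N} log p/(p+1))`. -/
theorem F1_deriv_at_zero (N : ℕ) [NeZero N] (hN : 2 ≤ N)
    (ψ : DirichletCharacter ℂ N) (hev : ψ.Even) (hprim : ψ.IsPrimitive) (T : ℝ) :
    DifferentiableAt ℝ (F1 N ψ T) 0 ∧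
      deriv (F1 N ψ T) 0 = F1 N ψ T 0 *
        (-(Real.log N : ℂ)
          + 2 * (((deriv (Lam ψ) (1 + 2 * I * T) / Lam ψ (1 + 2 * I * T)).re : ℝ) : ℂ)
          - 2 * (deriv xi 2 / xi 2)
          + ∑ p ∈ N.primeFactors, ((Real.log p / (p + 1) : ℝ) : ℂ)) := by
  classical
  have hψ1 : ψ ≠ 1 := by
    intro h
    rw [DirichletCharacter.IsPrimitive, h, DirichletCharacter.conductor_one] at hprim
    omega
  have hcψ1 : conjChar ψ ≠ 1 :=
    (MulChar.ringHomComp_ne_one_iff (RingHom.injective _)).mpr hψ1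
  have hre1 : ((1 : ℂ) + 2 * I * (T:ℂ)).re = 1 := by simp
  have hre2 : ((1 : ℂ) - 2 * I * (T:ℂ)).re = 1 := by simp
  have hconjpt : (starRingEnd ℂ) (1 - 2 * I * (T:ℂ)) = 1 + 2 * I * (T:ℂ) := by
    simp only [map_sub, map_mul, map_one, Complex.conj_I, Complex.conj_ofReal, map_ofNat]
    ring
  have hN0 : (N:ℂ) ≠ 0 := Nat.cast_ne_zero.mpr (NeZero.ne N)
  -- derivative of Lam ψ at 1 + 2iT
  have hL1 : HasDerivAt (Lam ψ) (deriv (Lam ψ) (1 + 2 * I * (T:ℂ))) (1 + 2 * I * (T:ℂ)) :=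
    (differentiableAt_Lam hψ1 (by rw [hre1]; norm_num)).hasDerivAt
  have hL2 : HasDerivAt (Lam (conjChar ψ))
      ((starRingEnd ℂ) (deriv (Lam ψ) (1 + 2 * I * (T:ℂ)))) (1 - 2 * I * (T:ℂ)) := by
    have h := hasDerivAt_conj_conj (f := Lam ψ) (z := 1 - 2 * I * (T:ℂ))
      (by rw [hconjpt]; exact hL1)
    have hfun : Lam (conjChar ψ) = fun w => (starRingEnd ℂ) (Lam ψ ((starRingEnd ℂ) w)) :=
      funext fun w => Lam_conj hψ1 w
    rw [hfun]; exact h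
  have hc2eq : Lam (conjChar ψ) (1 - 2 * I * (T:ℂ))
      = (starRingEnd ℂ) (Lam ψ (1 + 2 * I * (T:ℂ))) := by
    rw [Lam_conj hψ1, hconjpt]
  have hc1ne : Lam ψ (1 + 2 * I * (T:ℂ)) ≠ 0 := Lam_ne_zero hψ1 (le_of_eq hre1.symm)
  have hcc1ne : (starRingEnd ℂ) (Lam ψ (1 + 2 * I * (T:ℂ))) ≠ 0 := by
    simpa using hc1ne
  have hxi2 : HasDerivAt xi (deriv xi 2) 2 := differentiableAt_xi_two.hasDerivAt
  -- factor A
  have hinner : HasDerivAt (fun z : ℂ => -1 - z) (-1) 0 := by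
    simpa using (hasDerivAt_id (0:ℂ)).const_sub (-1)
  have h_A : HasDerivAt (fun z : ℂ => (N:ℂ) ^ (-1 - z))
      ((N:ℂ) ^ (-1 - (0:ℂ)) * Complex.log N * (-1)) 0 := hinner.const_cpow (Or.inl hN0)
  -- factor B
  have h_B : HasDerivAt (fun z : ℂ => Lam ψ (1 + z + 2 * I * (T:ℂ)))
      (deriv (Lam ψ) (1 + 2 * I * (T:ℂ))) 0 := by
    have hin : HasDerivAt (fun z : ℂ => 1 + z + 2 * I * (T:ℂ)) 1 0 := by
      simpa using (((hasDerivAt_id (0:ℂ)).const_add 1).add_const (2 * I * (T:ℂ)))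
    have hout : HasDerivAt (Lam ψ) (deriv (Lam ψ) (1 + 2 * I * (T:ℂ))) (1 + (0:ℂ) + 2 * I * (T:ℂ)) := by
      rw [show (1 + (0:ℂ) + 2 * I * (T:ℂ)) = 1 + 2 * I * (T:ℂ) by ring]; exact hL1
    have := hout.comp 0 hin; rw [mul_one] at this; exact this
  -- factor C
  have h_C : HasDerivAt (fun z : ℂ => Lam (conjChar ψ) (1 + z - 2 * I * (T:ℂ)))
      ((starRingEnd ℂ) (deriv (Lam ψ) (1 + 2 * I * (T:ℂ)))) 0 := by
    have hin : HasDerivAt (fun z : ℂ => 1 + z - 2 * I * (T:ℂ)) 1 0 := by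
      simpa using (((hasDerivAt_id (0:ℂ)).const_add 1).sub_const (2 * I * (T:ℂ)))
    have hout : HasDerivAt (Lam (conjChar ψ))
        ((starRingEnd ℂ) (deriv (Lam ψ) (1 + 2 * I * (T:ℂ)))) (1 + (0:ℂ) - 2 * I * (T:ℂ)) := by
      rw [show (1 + (0:ℂ) - 2 * I * (T:ℂ)) = 1 - 2 * I * (T:ℂ) by ring]; exact hL2
    have := hout.comp 0 hin; rw [mul_one] at this; exact this
  -- xi factor
  have h_X : HasDerivAt (fun z : ℂ => xi (2 + 2 * z)) (deriv xi 2 * 2) 0 := by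
    have hin : HasDerivAt (fun z : ℂ => 2 + 2 * z) 2 0 := by
      simpa using ((hasDerivAt_id (0:ℂ)).const_mul 2).const_add 2
    have hout : HasDerivAt xi (deriv xi 2) (2 + 2 * (0:ℂ)) := by
      rw [show (2 + 2 * (0:ℂ)) = 2 by ring]; exact hxi2
    exact hout.comp 0 hin
  have hDen := (h_X.mul_const (Lam ψ (1 + 2 * I * (T:ℂ)))).mul_const
      (Lam (conjChar ψ) (1 - 2 * I * (T:ℂ)))
  have hDen0 : xi (2 + 2 * (0:ℂ)) * Lam ψ (1 + 2 * I * (T:ℂ))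
      * Lam (conjChar ψ) (1 - 2 * I * (T:ℂ)) ≠ 0 := by
    rw [show (2 + 2 * (0:ℂ)) = 2 by ring]
    exact mul_ne_zero (mul_ne_zero xi_two_ne_zero hc1ne) (hc2eq ▸ hcc1ne)
  have hQ := (h_B.mul h_C).div hDen hDen0
  have h_P := hasDerivAt_finset_prod_log (u := N.primeFactors)
    (f := fun p (z : ℂ) => (1 + (p:ℂ) ^ (-1 - z))⁻¹)
    (a := fun p => ((Real.log p / (p + 1) : ℝ) : ℂ)) (x := 0)
    (fun p hp => prime_factor_hasDerivAt (Nat.prime_of_mem_primeFactors hp).two_le)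
  have hG := (h_A.mul hQ).mul h_P
  rw [show (0:ℂ) = ((0:ℝ):ℂ) by simp] at hG
  have hF : HasDerivAt (F1 N ψ T) _ 0 := hG.comp_ofReal
  refine ⟨hF.differentiableAt, ?_⟩
  rw [hF.deriv]
  simp only [F1, Pi.mul_apply, Pi.div_apply, Complex.ofReal_zero, add_zero, sub_zero, mul_zero]
  rw [hc2eq, ← Complex.natCast_log]
  rw [show (2:ℂ) * (((deriv (Lam ψ) (1 + 2 * I * (T:ℂ)) / Lam ψ (1 + 2 * I * (T:ℂ))).re : ℝ) : ℂ)
      = deriv (Lam ψ) (1 + 2 * I * (T:ℂ)) / Lam ψ (1 + 2 * I * (T:ℂ))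
        + (starRingEnd ℂ) (deriv (Lam ψ) (1 + 2 * I * (T:ℂ)) / Lam ψ (1 + 2 * I * (T:ℂ)))
      by rw [Complex.add_conj]; norm_cast]
  rw [map_div₀]
  have hx2ne : xi 2 ≠ 0 := xi_two_ne_zero
  set c := Lam ψ (1 + 2 * I * (T:ℂ)) with hc
  set d := deriv (Lam ψ) (1 + 2 * I * (T:ℂ)) with hd
  set x2 := xi 2 with hx2
  set dxi := deriv xi 2 with hdxi
  set P := ∏ p ∈ N.primeFactors, (1 + (p:ℂ) ^ (-1:ℂ))⁻¹ with hPdef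
  set S := ∑ p ∈ N.primeFactors, ((Real.log p / (p + 1) : ℝ) : ℂ) with hSdef
  rw [show c * (starRingEnd ℂ) c / (x2 * c * (starRingEnd ℂ) c) = 1 / x2 by
        field_simp
      , show ((d * (starRingEnd ℂ) c + c * (starRingEnd ℂ) d) * (x2 * c * (starRingEnd ℂ) c)
          - c * (starRingEnd ℂ) c * (dxi * 2 * c * (starRingEnd ℂ) c)) / (x2 * c * (starRingEnd ℂ) c) ^ 2
          = (d / c + (starRingEnd ℂ) d / (starRingEnd ℂ) c - 2 * dxi / x2) / x2 by
        field_simp]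
  ring_nf
end

section
/- Let F : (−δ,δ) → ℂ be twice continuously differentiable at 0 for some δ > 0. Then, with a and b the Laurent coefficients of ξ at s = 1 as in the context, lim_{η→0, η≠0} [ F(η)·ξ(1+η)·ξ(1−η) + F(0)/η² + F'(0)/η ] = −F''(0)/2 + (a²−2b)·F(0). -/
open Complex Filter Topology Set

lemma taylor2 (F : ℝ → ℂ) (hF : ContDiffAt ℝ 2 F 0) :
    Tendsto (fun η : ℝ =>
      (F η - F 0 - η • deriv F 0 - (η ^ 2 / 2) • deriv (deriv F) 0) / (η : ℂ) ^ 2)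
      (𝓝[≠] 0) (𝓝 0) := by
  set c := deriv (deriv F) 0 with hc
  set G : ℝ → ℂ := fun t => F t - F 0 - t • deriv F 0 - (t ^ 2 / 2) • c with hGdef
  set G' : ℝ → ℂ := fun t => deriv F t - deriv F 0 - t • c with hG'def
  obtain ⟨u, hu, huF⟩ := hF.contDiffOn le_rfl (by norm_num)
  obtain ⟨t, htu, htopen, h0t⟩ := mem_nhds_iff.mp hu
  have hFd : ∀ x ∈ t, DifferentiableAt ℝ F x := fun x hx =>
    ((huF.mono htu).differentiableOn (by norm_num)).differentiableAt (htopen.mem_nhds hx)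
  have hderivd : DifferentiableAt ℝ (deriv F) 0 := by
    have h1 : ContDiffOn ℝ 1 (deriv F) t :=
      (huF.mono htu).deriv_of_isOpen htopen (by norm_num)
    exact (h1.differentiableOn (by norm_num)).differentiableAt (htopen.mem_nhds h0t)
  have hder : HasDerivAt (deriv F) c 0 := hderivd.hasDerivAt
  have hlittle : (fun s : ℝ => G' s) =o[𝓝 0] fun s => s := by
    have h := hasDerivAt_iff_isLittleO.mp hder
    simpa [hG'def] using h
  have hGder : ∀ x ∈ t, HasDerivAt G (G' x) x := by
    intro x hx
    have h1 : HasDerivAt F (deriv F x) x := (hFd x hx).hasDerivAt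
    have h2 : HasDerivAt (fun s : ℝ => s • deriv F 0) (deriv F 0) x := by
      simpa using (hasDerivAt_id x).smul_const (deriv F 0)
    have h3 : HasDerivAt (fun s : ℝ => (s ^ 2 / 2) • c) (x • c) x := by
      have h4 : HasDerivAt (fun s : ℝ => s ^ 2 / 2) x x := by
        simpa using (hasDerivAt_pow 2 x).div_const 2
      simpa using h4.smul_const c
    exact ((h1.sub_const (F 0)).sub h2).sub h3
  have hG0 : G 0 = 0 := by simp [hGdef]
  -- main bound
  rw [NormedAddCommGroup.tendsto_nhds_zero]
  intro ε hε
  have hb : ∀ᶠ s in 𝓝 (0 : ℝ), ‖G' s‖ ≤ ε / 2 * ‖s‖ :=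
    hlittle.def (by positivity)
  obtain ⟨r, hr, hball⟩ := Metric.eventually_nhds_iff.mp
    (hb.and (htopen.eventually_mem h0t))
  rw [eventually_nhdsWithin_iff]
  filter_upwards [Metric.eventually_nhds_iff.mpr ⟨r, hr, fun x hx => hx⟩] with η hηr hη0
  have hη0' : η ≠ 0 := hη0
  have hηr' : |η| < r := by simpa [Real.dist_eq] using hηr
  have key : ‖G η‖ ≤ ε / 2 * η ^ 2 := by
    have hmem : ∀ x : ℝ, |x| ≤ |η| → (‖G' x‖ ≤ ε / 2 * ‖x‖ ∧ x ∈ t) := by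
      intro x hx
      exact hball (by simpa [Real.dist_eq] using lt_of_le_of_lt hx hηr')
    rcases lt_or_gt_of_ne hη0' with hneg | hpos
    · -- η < 0 : interval [η, 0]
      have habs : ∀ x ∈ Icc η 0, |x| ≤ |η| := by
        intro x hx
        rw [abs_of_nonpos hx.2, abs_of_nonpos hneg.le]
        linarith [hx.1]
      have hderint : ∀ x ∈ Icc η 0, HasDerivWithinAt G (G' x) (Icc η 0) x :=
        fun x hx => ((hGder x (hmem x (habs x hx)).2).hasDerivWithinAt)
      have hbound : ∀ x ∈ Icc η 0, ‖G' x‖ ≤ ε / 2 * |η| := by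
        intro x hx
        refine le_trans (hmem x (habs x hx)).1 ?_
        have := habs x hx
        rw [Real.norm_eq_abs]
        nlinarith [abs_nonneg x]
      have := norm_image_sub_le_of_norm_deriv_le_segment' hderint (fun x hx => hbound x (Ico_subset_Icc_self hx)) 0
        ⟨hneg.le, le_refl 0⟩
      rw [hG0, zero_sub, norm_neg] at this
      calc ‖G η‖ ≤ ε / 2 * |η| * (0 - η) := this
        _ = ε / 2 * η ^ 2 := by rw [abs_of_nonpos hneg.le]; ring
    · -- η > 0 : interval [0, η]
      have habs : ∀ x ∈ Icc 0 η, |x| ≤ |η| := by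
        intro x hx
        rw [_root_.abs_of_nonneg hx.1, _root_.abs_of_nonneg hpos.le]
        exact hx.2
      have hderint : ∀ x ∈ Icc 0 η, HasDerivWithinAt G (G' x) (Icc 0 η) x :=
        fun x hx => ((hGder x (hmem x (habs x hx)).2).hasDerivWithinAt)
      have hbound : ∀ x ∈ Icc 0 η, ‖G' x‖ ≤ ε / 2 * |η| := by
        intro x hx
        refine le_trans (hmem x (habs x hx)).1 ?_
        have := habs x hx
        rw [Real.norm_eq_abs]
        nlinarith [abs_nonneg x]
      have := norm_image_sub_le_of_norm_deriv_le_segment' hderint (fun x hx => hbound x (Ico_subset_Icc_self hx)) η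
        ⟨hpos.le, le_refl η⟩
      rw [hG0, sub_zero] at this
      calc ‖G η‖ ≤ ε / 2 * |η| * (η - 0) := this
        _ = ε / 2 * η ^ 2 := by rw [_root_.abs_of_nonneg hpos.le]; ring
  have hnorm : ‖G η / (η : ℂ) ^ 2‖ = ‖G η‖ / η ^ 2 := by
    rw [norm_div, norm_pow, Complex.norm_real, Real.norm_eq_abs, _root_.sq_abs]
  have hη2 : (0 : ℝ) < η ^ 2 := by positivity
  calc ‖G η / (η : ℂ) ^ 2‖ = ‖G η‖ / η ^ 2 := hnorm
    _ ≤ ε / 2 * η ^ 2 / η ^ 2 := by gcongr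
    _ = ε / 2 := by field_simp
    _ < ε := by linarith

/-- If `F` is twice continuously differentiable at `0` and `a`, `b` are the Laurent
coefficients of `ξ` at `s = 1`, then
`F(η)ξ(1+η)ξ(1−η) + F(0)/η² + F'(0)/η → −F''(0)/2 + (a²−2b)F(0)` as `η → 0`. -/
theorem xi_mul_laurent_limit (δ : ℝ) (hδ : 0 < δ) (F : ℝ → ℂ) (hF : ContDiffAt ℝ 2 F 0)
    (a b : ℂ)
    (ha : Tendsto (fun s : ℂ => xi s - (s - 1)⁻¹) (𝓝[≠] 1) (𝓝 a))
    (hb : Tendsto (fun s : ℂ => (xi s - (s - 1)⁻¹ - a) / (s - 1)) (𝓝[≠] 1) (𝓝 b)) :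
    Tendsto
      (fun η : ℝ => F η * xi (1 + (η : ℂ)) * xi (1 - (η : ℂ)) + F 0 / (η : ℂ) ^ 2
        + deriv F 0 / (η : ℂ))
      (𝓝[≠] 0)
      (𝓝 (-(deriv (deriv F) 0) / 2 + (a ^ 2 - 2 * b) * F 0)) := by
  set c := deriv (deriv F) 0 with hc
  set d := deriv F 0 with hd
  -- maps into punctured neighborhoods
  have hmap1 : Tendsto (fun η : ℝ => 1 + (η : ℂ)) (𝓝[≠] (0:ℝ)) (𝓝[≠] (1:ℂ)) := by
    apply tendsto_nhdsWithin_of_tendsto_nhds_of_eventually_within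
    · have : Continuous fun η : ℝ => 1 + (η : ℂ) :=
        continuous_const.add Complex.continuous_ofReal
      exact (this.tendsto' 0 1 (by simp)).mono_left nhdsWithin_le_nhds
    · filter_upwards [self_mem_nhdsWithin] with η hη
      simp only [Set.mem_compl_iff, Set.mem_singleton_iff]
      intro h
      exact hη (by exact_mod_cast (by simpa using h : (η:ℂ) = 0))
  have hmap2 : Tendsto (fun η : ℝ => 1 - (η : ℂ)) (𝓝[≠] (0:ℝ)) (𝓝[≠] (1:ℂ)) := by
    apply tendsto_nhdsWithin_of_tendsto_nhds_of_eventually_within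
    · have : Continuous fun η : ℝ => 1 - (η : ℂ) :=
        continuous_const.sub Complex.continuous_ofReal
      exact (this.tendsto' 0 1 (by simp)).mono_left nhdsWithin_le_nhds
    · filter_upwards [self_mem_nhdsWithin] with η hη
      simp only [Set.mem_compl_iff, Set.mem_singleton_iff]
      intro h
      apply hη
      have : (η : ℂ) = 0 := by linear_combination -h
      exact_mod_cast this
  have hA : Tendsto (fun η : ℝ => xi (1 + (η:ℂ)) - (η:ℂ)⁻¹) (𝓝[≠] 0) (𝓝 a) := by
    have h2 := ha.comp hmap1
    have heq : ((fun s : ℂ => xi s - (s - 1)⁻¹) ∘ fun η : ℝ => 1 + (η:ℂ))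
        = fun η : ℝ => xi (1 + (η:ℂ)) - (η:ℂ)⁻¹ := by
      funext η
      simp only [Function.comp_apply, add_sub_cancel_left]
    rwa [heq] at h2
  have hB : Tendsto (fun η : ℝ => xi (1 - (η:ℂ)) + (η:ℂ)⁻¹) (𝓝[≠] 0) (𝓝 a) := by
    have := hb.comp hmap2
    have h2 := ha.comp hmap2
    have heq : (fun η : ℝ => (fun s : ℂ => xi s - (s - 1)⁻¹) (1 - (η:ℂ)))
        = fun η : ℝ => xi (1 - (η:ℂ)) + (η:ℂ)⁻¹ := by
      funext η
      simp only
      rw [show (1 - (η:ℂ) - 1) = -(η:ℂ) by ring, inv_neg, sub_neg_eq_add]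
    rw [← heq]
    exact h2
  have hA' : Tendsto (fun η : ℝ => (xi (1 + (η:ℂ)) - (η:ℂ)⁻¹ - a) / (η:ℂ)) (𝓝[≠] 0) (𝓝 b) := by
    have h2 := hb.comp hmap1
    have heq : ((fun s : ℂ => (xi s - (s - 1)⁻¹ - a) / (s - 1)) ∘ fun η : ℝ => 1 + (η:ℂ))
        = fun η : ℝ => (xi (1 + (η:ℂ)) - (η:ℂ)⁻¹ - a) / (η:ℂ) := by
      funext η
      simp only [Function.comp_apply, add_sub_cancel_left]
    rwa [heq] at h2
  have hB' : Tendsto (fun η : ℝ => (xi (1 - (η:ℂ)) + (η:ℂ)⁻¹ - a) / (η:ℂ)) (𝓝[≠] 0) (𝓝 (-b)) := by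
    have h2 := (hb.comp hmap2).neg
    have heq : (fun η : ℝ => -((fun s : ℂ => (xi s - (s - 1)⁻¹ - a) / (s - 1)) (1 - (η:ℂ))))
        = fun η : ℝ => (xi (1 - (η:ℂ)) + (η:ℂ)⁻¹ - a) / (η:ℂ) := by
      funext η
      simp only
      rw [show (1 - (η:ℂ) - 1) = -(η:ℂ) by ring, inv_neg, sub_neg_eq_add, div_neg, neg_neg]
    rw [← heq]
    exact h2
  have hBA : Tendsto (fun η : ℝ =>
      ((xi (1 - (η:ℂ)) + (η:ℂ)⁻¹) - (xi (1 + (η:ℂ)) - (η:ℂ)⁻¹)) / (η:ℂ))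
      (𝓝[≠] 0) (𝓝 (-b - b)) := by
    have := hB'.sub hA'
    apply this.congr
    intro η
    ring
  have hFt : Tendsto F (𝓝[≠] (0:ℝ)) (𝓝 (F 0)) :=
    (hF.continuousAt.tendsto).mono_left nhdsWithin_le_nhds
  have htay := taylor2 F hF
  rw [← hc, ← hd] at htay
  have hsum : Tendsto (fun η : ℝ =>
      (-((F η - F 0 - η • d - (η ^ 2 / 2) • c) / (η:ℂ)^2) - c/2)
      + F η * (((xi (1 - (η:ℂ)) + (η:ℂ)⁻¹) - (xi (1 + (η:ℂ)) - (η:ℂ)⁻¹)) / (η:ℂ))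
      + F η * ((xi (1 + (η:ℂ)) - (η:ℂ)⁻¹) * (xi (1 - (η:ℂ)) + (η:ℂ)⁻¹)))
      (𝓝[≠] 0)
      (𝓝 ((-(0:ℂ) - c/2) + F 0 * (-b - b) + F 0 * (a * a))) :=
    ((htay.neg.sub_const (c/2)).add (hFt.mul hBA)).add (hFt.mul (hA.mul hB))
  have hval : ((-(0:ℂ) - c/2) + F 0 * (-b - b) + F 0 * (a * a))
      = -c / 2 + (a ^ 2 - 2 * b) * F 0 := by ring
  rw [hval] at hsum
  apply hsum.congr'
  filter_upwards [self_mem_nhdsWithin] with η hη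
  have hη0 : (η : ℂ) ≠ 0 := Complex.ofReal_ne_zero.mpr hη
  rw [Complex.real_smul, Complex.real_smul]
  push_cast
  simp only [inv_eq_one_div]
  field_simp
  ring_nf
end
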